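/- Let (G, ψ) be an ordered graph, 𝒫 a partition of V(G), H any graph with vertex set 𝒫, and k a positive integer. Let 𝒫' be a partition of V(G) refining 𝒫 such that each part of 𝒫 is the union of at most k parts of 𝒫', and let H' be the graph with vertex set 𝒫' in which two distinct parts P', Q' ∈ 𝒫' are adjacent exactly when the parts P, Q ∈ 𝒫 containing them are equal or adjacent in H. Then str(𝒫', H') ≤ k · (str(𝒫, H) + 1). -/

import Mathlib

open SimpleGraph

/-- The convex closure (span) of a set of vertices in a linearly ordered vertex set. -/
def conv {V : Type*} [LinearOrder V] (X : Set V) : Set V :=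
  {v | ∃ a ∈ X, ∃ b ∈ X, a ≤ v ∧ v ≤ b}

/-- The `r`-th power of a graph: two distinct vertices are adjacent exactly when they
are joined by a walk of length at most `r`. -/
def powerGraph {α : Type*} (H : SimpleGraph α) (r : ℕ) : SimpleGraph α where
  Adj x y := x ≠ y ∧ ∃ w : H.Walk x y, w.length ≤ r
  symm := by
    constructor
    rintro x y ⟨hxy, w, hw⟩
    exact ⟨hxy.symm, w.reverse, by simpa using hw⟩
  loopless := by
    constructor
    rintro x ⟨hx, -⟩
    exact hx rfl

/-- The `H`-stretch of a part `X` of the partition `Prt` (w.r.t. the vertex ordering):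
the number of parts whose span meets the span of the union of the closed
`H`-neighborhood of `X`. -/
noncomputable def strOf {V : Type*} [LinearOrder V] (Prt : Set (Set V))
    (H : SimpleGraph ↥Prt) (X : ↥Prt) : ℕ :=
  {Y : ↥Prt | (conv (Y : Set V) ∩
    conv (⋃ Z ∈ {Z : ↥Prt | Z = X ∨ H.Adj X Z}, (Z : Set V))).Nonempty}.ncard

/-- The stretch `str(Prt, H)`: the maximum `H`-stretch of a part of `Prt`. -/
noncomputable def strP {V : Type*} [LinearOrder V] (Prt : Set (Set V))
    (H : SimpleGraph ↥Prt) : ℕ :=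
  sSup (Set.range (strOf Prt H))


lemma conv_mono {V : Type*} [LinearOrder V] {X Y : Set V} (h : X ⊆ Y) : conv X ⊆ conv Y := by
  rintro v ⟨a, ha, b, hb, h1, h2⟩
  exact ⟨a, h ha, b, h hb, h1, h2⟩

lemma ncard_le_mul_aux {α β : Type*} {S' : Set α} {S : Set β} (f : α → β)
    (hfinS' : S'.Finite) (hfinS : S.Finite)
    (hmaps : ∀ a ∈ S', f a ∈ S) (k : ℕ)
    (hfib : ∀ b ∈ S, {a ∈ S' | f a = b}.ncard ≤ k) : S'.ncard ≤ k * S.ncard := by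
  classical
  rw [Set.ncard_eq_toFinset_card _ hfinS', Set.ncard_eq_toFinset_card _ hfinS]
  refine Finset.card_le_mul_card_image_of_maps_to (t := hfinS.toFinset)
    (fun a ha => by simpa using hmaps a (by simpa using ha)) k (fun b hb => ?_)
  have hb' : b ∈ S := by simpa using hb
  have := hfib b hb'
  rw [Set.ncard_eq_toFinset_card _ (hfinS'.subset (Set.sep_subset _ _))] at this
  refine le_trans (le_of_eq ?_) this
  congr 1
  ext a
  simp [Set.Finite.mem_toFinset]

theorem stmt13 {V : Type*} [Fintype V] [LinearOrder V] (G : SimpleGraph V)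
    (Prt Prt' : Set (Set V))
    (hpart : Setoid.IsPartition Prt) (hpart' : Setoid.IsPartition Prt')
    (k : ℕ) (hk : 0 < k)
    (hrefine : ∀ P' ∈ Prt', ∃ P ∈ Prt, P' ⊆ P)
    (hbound : ∀ P ∈ Prt, {P' ∈ Prt' | P' ⊆ P}.ncard ≤ k)
    (H : SimpleGraph ↥Prt) (H' : SimpleGraph ↥Prt')
    (hH' : ∀ P' Q' : ↥Prt', H'.Adj P' Q' ↔ P' ≠ Q' ∧
      ∃ P Q : ↥Prt, (P' : Set V) ⊆ (P : Set V) ∧ (Q' : Set V) ⊆ (Q : Set V) ∧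
        (P = Q ∨ H.Adj P Q)) :
    strP Prt' H' ≤ k * (strP Prt H + 1) := by
  classical
  -- choice of containing part
  choose F hF hFsub using hrefine
  set f : ↥Prt' → ↥Prt := fun Y' => ⟨F (Y' : Set V) Y'.2, hF _ Y'.2⟩ with hf
  have hsub : ∀ Y' : ↥Prt', (Y' : Set V) ⊆ (f Y' : Set V) := fun Y' => hFsub _ Y'.2
  -- parts are nonempty
  have hne : ∀ Y' : ↥Prt', (Y' : Set V).Nonempty := by
    intro Y'
    rcases Set.eq_empty_or_nonempty (Y' : Set V) with h | h
    · exact absurd (h ▸ Y'.2) hpart'.1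
    · exact h
  refine csSup_le' ?_
  rintro n ⟨X', rfl⟩
  set X : ↥Prt := f X'
  set C : Set V := conv (⋃ Z ∈ {Z : ↥Prt | Z = X ∨ H.Adj X Z}, (Z : Set V)) with hC
  set C' : Set V := conv (⋃ Z ∈ {Z : ↥Prt' | Z = X' ∨ H'.Adj X' Z}, (Z : Set V)) with hC'
  -- key inclusion C' ⊆ C
  have hCC' : C' ⊆ C := by
    refine conv_mono ?_
    refine Set.iUnion₂_subset fun Z' hZ' => ?_
    have : ∃ Z : ↥Prt, (Z = X ∨ H.Adj X Z) ∧ (Z' : Set V) ⊆ (Z : Set V) := by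
      rcases hZ' with rfl | hadj
      · exact ⟨X, Or.inl rfl, hsub Z'⟩
      · obtain ⟨-, P, Q, hP, hQ, hPQ⟩ := (hH' X' Z').1 hadj
        obtain ⟨x, hx⟩ := hne X'
        have hPX : P = X := by
          apply Subtype.ext
          exact (hpart.2 x).unique ⟨P.2, hP hx⟩ ⟨X.2, hsub X' hx⟩
        subst hPX
        rcases hPQ with rfl | hadjPQ
        · exact ⟨X, Or.inl rfl, hQ⟩
        · exact ⟨Q, Or.inr hadjPQ, hQ⟩
    obtain ⟨Z, hZmem, hZsub⟩ := this
    exact hZsub.trans (Set.subset_biUnion_of_mem hZmem)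
  -- the two stretch sets
  set S' : Set ↥Prt' := {Y' : ↥Prt' | (conv (Y' : Set V) ∩ C').Nonempty}
  set S : Set ↥Prt := {Y : ↥Prt | (conv (Y : Set V) ∩ C).Nonempty}
  have hmaps : ∀ Y' ∈ S', f Y' ∈ S := by
    rintro Y' ⟨v, hv1, hv2⟩
    exact ⟨v, conv_mono (hsub Y') hv1, hCC' hv2⟩
  have hfib : ∀ Y ∈ S, {Y' ∈ S' | f Y' = Y}.ncard ≤ k := by
    intro Y hY
    refine le_trans ?_ (hbound (Y : Set V) Y.2)
    refine Set.ncard_le_ncard_of_injOn (fun Y' => (Y' : Set V)) ?_ ?_ ?_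
    · rintro Y' ⟨-, rfl⟩
      exact ⟨Y'.2, hsub Y'⟩
    · exact fun a _ b _ h => Subtype.ext h
    · exact Set.toFinite _
  have key : strOf Prt' H' X' ≤ k * strOf Prt H X :=
    ncard_le_mul_aux f (Set.toFinite _) (Set.toFinite _) hmaps k hfib
  have hX : strOf Prt H X ≤ strP Prt H :=
    le_csSup (Set.Finite.bddAbove (Set.finite_range _)) ⟨X, rfl⟩
  calc strOf Prt' H' X' ≤ k * strOf Prt H X := key
    _ ≤ k * (strP Prt H + 1) := by
        exact Nat.mul_le_mul_left k (le_trans hX (Nat.le_succ _))
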